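/- With notation as above, the unique polynomial Q_i is given explicitly by Q_i(x) = Σ_{m≥0} Σ_{l_0+...+l_m = M, l_r > 0} [Φ(x)/(x−z_i)^{l_0}] · ∏_{r=1}^{m} C_{i,l_r}/(l_1+...+l_r), where C_{i,l} = Σ_{j≠i} M/(z_j−z_i)^l. -/

import Mathlib

open Polynomial Finset

/-- `Φ(x)/(x−z_i)^r` as a polynomial: the exponent of `(x − z_i)` is lowered by `r`. -/
noncomputable def phiQuot {K : Type*} [Field K] (n M : ℕ) (z : Fin n → K)
    (i : Fin n) (r : ℕ) : K[X] :=
  (X - C (z i)) ^ (M - r) * ∏ a ∈ univ.erase i, (X - C (z a)) ^ M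

/-- `C_{i,l} = M·Σ_{j≠i} (z_j − z_i)^{−l}`. -/
noncomputable def Cil {K : Type*} [Field K] (n M : ℕ) (z : Fin n → K)
    (i : Fin n) (l : ℕ) : K :=
  (M : K) * ∑ j ∈ univ.erase i, ((z j - z i) ^ l)⁻¹

noncomputable def compW {K : Type*} [Field K] (n M : ℕ) (z : Fin n → K) (i : Fin n)
    (bs : List ℕ) : K :=
  ∏ r ∈ Finset.range bs.length,
    Cil n M z i (bs.getD r 0) * ((∑ s ∈ Finset.range (r + 1), (bs.getD s 0 : K)))⁻¹

noncomputable def compH {K : Type*} [Field K] (n M : ℕ) (z : Fin n → K) (i : Fin n)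
    (d : ℕ) : K :=
  ∑ c : Composition d, compW n M z i c.blocks

lemma comp_sum_reverse {β : Type*} [AddCommMonoid β] (d : ℕ) (F : List ℕ → β) :
    ∑ c : Composition d, F c.blocks = ∑ c : Composition d, F c.blocks.reverse := by
  refine Finset.sum_bij' (fun c _ => ⟨c.blocks.reverse, ?_, ?_⟩)
    (fun c _ => ⟨c.blocks.reverse, ?_, ?_⟩) (fun _ _ => mem_univ _) (fun _ _ => mem_univ _)
    ?_ ?_ ?_
  · intro i hi; exact Composition.blocks_pos _ (List.mem_reverse.1 hi)
  · rw [List.sum_reverse]; exact Composition.blocks_sum _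
  · intro i hi; exact Composition.blocks_pos _ (List.mem_reverse.1 hi)
  · rw [List.sum_reverse]; exact Composition.blocks_sum _
  · intro c _; ext1; simp
  · intro c _; ext1; simp
  · intro c _; simp

lemma comp_sum_cons {β : Type*} [AddCommMonoid β] (d : ℕ) (hd : 0 < d) (F : List ℕ → β) :
    ∑ c : Composition d, F c.blocks
      = ∑ l ∈ Icc 1 d, ∑ c : Composition (d - l), F (l :: c.blocks) := by
  have hcons : ∀ c : Composition d, c.blocks = c.blocks.headI :: c.blocks.tail := by
    intro c
    cases h : c.blocks with
    | nil => exfalso; have := c.blocks_sum; rw [h] at this; simp at this; omega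
    | cons b t => simp
  have hsum : ∀ c : Composition d, c.blocks.headI + c.blocks.tail.sum = d := by
    intro c
    conv_rhs => rw [← c.blocks_sum]
    conv_rhs => rw [hcons c]
    simp
  have hmem : ∀ c : Composition d, c.blocks.headI ∈ Icc 1 d := by
    intro c
    have h1 : 0 < c.blocks.headI := by
      apply c.blocks_pos; rw [hcons c]; exact List.mem_cons_self
    have h2 := hsum c
    simp only [mem_Icc]; omega
  rw [← Finset.sum_sigma (Icc 1 d) (fun l => (univ : Finset (Composition (d - l))))
      (fun p => F (p.1 :: p.2.blocks))]
  refine Finset.sum_bij' (fun c _ => ⟨c.blocks.headI, ⟨c.blocks.tail, ?_, ?_⟩⟩)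
    (fun p hp => ⟨p.1 :: p.2.blocks, ?_, ?_⟩) (fun c _ => ?_) (fun p hp => mem_univ _)
    ?_ ?_ ?_
  · intro j hj; exact Composition.blocks_pos _ (List.mem_of_mem_tail hj)
  · have := hsum c; omega
  · intro j hj
    rcases List.mem_cons.1 hj with rfl | hj
    · have := (mem_Icc.1 (mem_sigma.1 hp).1).1; omega
    · exact Composition.blocks_pos _ hj
  · have h2 := (mem_Icc.1 (mem_sigma.1 hp).1).2
    have := p.2.blocks_sum
    simp only [List.sum_cons, this]; omega
  · exact mem_sigma.2 ⟨hmem c, mem_univ _⟩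
  · intro c _; ext1; exact (hcons c).symm
  · intro p hp
    rcases p with ⟨l, cp⟩
    simp only [List.headI_cons, List.tail_cons]
  · intro c _
    simp only []
    conv_lhs => rw [hcons c]

lemma comp_sum_concat {β : Type*} [AddCommMonoid β] (d : ℕ) (hd : 0 < d) (F : List ℕ → β) :
    ∑ c : Composition d, F c.blocks
      = ∑ l ∈ Icc 1 d, ∑ c : Composition (d - l), F (c.blocks ++ [l]) := by
  rw [comp_sum_reverse d F, comp_sum_cons d hd (fun bs => F bs.reverse)]
  refine Finset.sum_congr rfl fun l _ => ?_
  rw [comp_sum_reverse (d - l) (fun bs => F (bs ++ [l]))]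
  refine Finset.sum_congr rfl fun c _ => ?_
  simp [List.reverse_cons]

lemma sum_range_getD_cast {K : Type*} [Field K] (l : List ℕ) :
    ∑ s ∈ Finset.range l.length, (l.getD s 0 : K) = (l.sum : K) := by
  induction l with
  | nil => simp
  | cons x t ih =>
    rw [List.length_cons, Finset.sum_range_succ']
    simp only [List.getD_cons_succ, List.getD_cons_zero, ih, List.sum_cons]
    push_cast; ring

lemma compH_zero {K : Type*} [Field K] (n M : ℕ) (z : Fin n → K) (i : Fin n) :
    compH n M z i 0 = 1 := by
  have hb : ∀ c : Composition 0, c.blocks = [] := by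
    intro c
    have h := c.blocks_sum
    cases h2 : c.blocks with
    | nil => rfl
    | cons b t =>
      exfalso
      have := c.blocks_pos (by rw [h2]; exact List.mem_cons_self)
      rw [h2] at h; simp at h; omega
  have h1 : (compH n M z i 0 : K) = ∑ c : Composition 0, compW n M z i [] :=
    Finset.sum_congr rfl fun c _ => by rw [hb c]
  rw [h1, Finset.sum_const, compW]
  simp [composition_card]   -- card univ = Fintype.card = 2^(0-1) = 1

lemma compW_concat {K : Type*} [Field K] (n M : ℕ) (z : Fin n → K) (i : Fin n)
    (bs : List ℕ) (l : ℕ) :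
    compW n M z i (bs ++ [l])
      = compW n M z i bs * (Cil n M z i l * (((bs.sum + l : ℕ) : K))⁻¹) := by
  unfold compW
  rw [List.length_append, List.length_singleton, Finset.prod_range_succ]
  congr 1
  · refine Finset.prod_congr rfl fun r hr => ?_
    have hr' := Finset.mem_range.1 hr
    rw [List.getD_append _ _ _ _ hr']
    congr 2
    refine Finset.sum_congr rfl fun s hs => ?_
    have hs' := Finset.mem_range.1 hs
    rw [List.getD_append _ _ _ _ (by omega)]
  · congr 2
    · rw [List.getD_append_right _ _ _ _ (le_refl _)]
      simp
    · rw [Finset.sum_range_succ, List.getD_append_right _ _ _ _ (le_refl _)]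
      have : ∑ s ∈ Finset.range bs.length, ((bs ++ [l]).getD s 0 : K)
          = ∑ s ∈ Finset.range bs.length, (bs.getD s 0 : K) :=
        Finset.sum_congr rfl fun s hs => by
          rw [List.getD_append _ _ _ _ (Finset.mem_range.1 hs)]
      rw [this, sum_range_getD_cast]
      simp

lemma compH_rec {K : Type*} [Field K] (n M : ℕ) (z : Fin n → K) (i : Fin n) (d : ℕ) (hd : 0 < d)
    (hdK : (d : K) ≠ 0) :
    (d : K) * compH n M z i d = ∑ l ∈ Icc 1 d, Cil n M z i l * compH n M z i (d - l) := by
  unfold compH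
  rw [comp_sum_concat d hd (compW n M z i), Finset.mul_sum]
  refine Finset.sum_congr rfl fun l hl => ?_
  rw [Finset.mul_sum, Finset.mul_sum]
  refine Finset.sum_congr rfl fun c _ => ?_
  rw [compW_concat]
  have hls : c.blocks.sum + l = d := by
    have := c.blocks_sum
    have hl' := Finset.mem_Icc.1 hl
    omega
  rw [hls]
  field_simp

lemma pf_aux {K : Type*} [Field K] (a b : K) (hab : b - a ≠ 0) (R : K[X]) (M r : ℕ)
    (hr : 1 ≤ r) (hrM : r ≤ M) :
    (X - C a) ^ (M - r) * ((X - C b) ^ (M - 1) * R)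
      = C (((b - a) ^ r)⁻¹) * ((X - C b) ^ (M - 1) * ((X - C a) ^ M * R))
        - ∑ s ∈ Icc 1 r,
            C (((b - a) ^ (r - s + 1))⁻¹) * ((X - C a) ^ (M - s) * ((X - C b) ^ M * R)) := by
  set w : K := b - a with hw
  set Y : K[X] := X - C a with hY
  set Z : K[X] := X - C b with hZdef
  have hZ : Z = Y - C w := by rw [hZdef, hY, hw, C_sub]; ring
  set S : K[X] := ∑ s ∈ Icc 1 r, C (w ^ (s - 1)) * Y ^ (r - s) with hS
  have hSG : S = ∑ t ∈ range r, Y ^ t * C w ^ (r - 1 - t) := by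
    rw [hS]
    have h1 : Icc 1 r = Ico 1 (r + 1) := by rw [Finset.Ico_add_one_right_eq_Icc]
    rw [h1, Finset.sum_Ico_eq_sum_range]
    simp only [Nat.add_sub_cancel]
    rw [← Finset.sum_range_reflect (fun t => Y ^ t * C w ^ (r - 1 - t)) r]
    refine Finset.sum_congr rfl fun t ht => ?_
    have ht' := Finset.mem_range.1 ht
    have e1 : 1 + t - 1 = t := by omega
    have e2 : r - (1 + t) = r - 1 - t := by omega
    have e3 : r - 1 - (r - 1 - t) = t := by omega
    rw [e1, e2, e3, C_pow, mul_comm]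
  have hkey : Y ^ r - Z * S = C (w ^ r) := by
    rw [hSG, mul_comm Z _, hZ, geom_sum₂_mul Y (C w) r, C_pow]
    ring
  have hwr : (w : K) ^ r ≠ 0 := pow_ne_zero _ hab
  set T : K[X] := C ((w ^ r)⁻¹) * (Y ^ (M - r) * (Z ^ (M - 1) * R)) with hT
  have hsum : ∑ s ∈ Icc 1 r, C ((w ^ (r - s + 1))⁻¹) * (Y ^ (M - s) * (Z ^ M * R))
      = (S * Z) * T := by
    rw [hS, Finset.sum_mul, Finset.sum_mul]
    refine Finset.sum_congr rfl fun s hs => ?_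
    have hs' := Finset.mem_Icc.1 hs
    have hc : (w ^ (r - s + 1))⁻¹ = (w ^ r)⁻¹ * w ^ (s - 1) := by
      have hpow : w ^ r = w ^ (r - s + 1) * w ^ (s - 1) := by
        rw [← pow_add]; congr 1; omega
      rw [hpow, mul_inv]
      have : w ^ (s - 1) ≠ 0 := pow_ne_zero _ hab
      field_simp
    have hYs : Y ^ (M - s) = Y ^ (M - r) * Y ^ (r - s) := by
      rw [← pow_add]; congr 1; omega
    have hZM : Z ^ M = Z ^ (M - 1) * Z := by
      rw [← pow_succ]; congr 1; omega
    rw [hc, C_mul, hYs, hZM, hT]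
    ring
  have hYM : Y ^ M = Y ^ (M - r) * Y ^ r := by rw [← pow_add]; congr 1; omega
  have hfirst : C ((w ^ r)⁻¹) * (Z ^ (M - 1) * (Y ^ M * R)) = Y ^ r * T := by
    rw [hYM, hT]; ring
  rw [hsum, hfirst]
  have : Y ^ r * T - S * Z * T = (Y ^ r - Z * S) * T := by ring
  rw [this, hkey, hT]
  have h2 : C (w ^ r) * C ((w ^ r)⁻¹) = 1 := by
    rw [← C_mul, mul_inv_cancel₀ hwr, C_1]
  calc Y ^ (M - r) * (Z ^ (M - 1) * R)
      = (C (w ^ r) * C ((w ^ r)⁻¹)) * (Y ^ (M - r) * (Z ^ (M - 1) * R)) := by rw [h2, one_mul]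
    _ = C (w ^ r) * (C ((w ^ r)⁻¹) * (Y ^ (M - r) * (Z ^ (M - 1) * R))) := by ring

lemma derivative_finset_prod {K : Type*} [Field K] {ι : Type*} [DecidableEq ι]
    (s : Finset ι) (f : ι → K[X]) :
    derivative (∏ a ∈ s, f a) = ∑ a ∈ s, (∏ b ∈ s.erase a, f b) * derivative (f a) := by
  induction s using Finset.induction_on with
  | empty => simp
  | @insert x s hx ih =>
    rw [Finset.prod_insert hx, derivative_mul, ih, Finset.sum_insert hx,
      Finset.erase_insert hx, Finset.mul_sum, mul_comm (derivative (f x))]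
    congr 1
    refine Finset.sum_congr rfl fun a ha => ?_
    rw [Finset.erase_insert_of_ne (by rintro rfl; exact hx ha),
      Finset.prod_insert (fun h => hx (Finset.mem_of_mem_erase h))]
    ring

lemma deriv_mem {K : Type*} [Field K] (n M : ℕ) (hM : 0 < M) (z : Fin n → K)
    (hz : Function.Injective z) (i : Fin n) (B : ℕ → K)
    (hrec : ∀ m, 1 ≤ m → m ≤ M →
      ((M - m : ℕ) : K) * B m = ∑ l ∈ Icc 1 (M - m), Cil n M z i l * B (m + l)) :
    derivative (∑ m ∈ Icc 1 M, C (B m) * phiQuot n M z i m)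
      ∈ Submodule.span K (Set.range fun j : Fin n => phiQuot n M z j 1) := by
  classical
  set Y : K[X] := X - C (z i) with hYdef
  set P : K[X] := ∏ a ∈ univ.erase i, (X - C (z a)) ^ M with hPdef
  set Rj : Fin n → K[X] := fun j => ∏ a ∈ (univ.erase i).erase j, (X - C (z a)) ^ M with hRdef
  have hφ : ∀ m, phiQuot n M z i m = Y ^ (M - m) * P := fun m => rfl
  have hw : ∀ j ∈ univ.erase i, z j - z i ≠ 0 := by
    intro j hj
    have : j ≠ i := (Finset.mem_erase.1 hj).1
    exact sub_ne_zero.2 fun h => this (hz h)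
  have hP2 : ∀ j ∈ univ.erase i, P = (X - C (z j)) ^ M * Rj j := by
    intro j hj
    exact (Finset.mul_prod_erase _ _ hj).symm
  have hψ : ∀ j ∈ univ.erase i,
      phiQuot n M z j 1 = (X - C (z j)) ^ (M - 1) * (Y ^ M * Rj j) := by
    intro j hj
    have hji : j ≠ i := (Finset.mem_erase.1 hj).1
    have hi' : i ∈ univ.erase j := Finset.mem_erase.2 ⟨Ne.symm hji, mem_univ _⟩
    rw [phiQuot]
    congr 1
    rw [← Finset.mul_prod_erase _ _ hi', Finset.erase_right_comm]
  -- derivative of P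
  have hdP : derivative P = ∑ j ∈ univ.erase i,
      C (M : K) * ((X - C (z j)) ^ (M - 1) * Rj j) := by
    rw [hPdef, derivative_finset_prod]
    refine Finset.sum_congr rfl fun j hj => ?_
    rw [derivative_X_sub_C_pow]
    ring
  -- step 1: expand the derivative
  have step1 : derivative (∑ m ∈ Icc 1 M, C (B m) * phiQuot n M z i m)
      = (∑ m ∈ Icc 1 M, C (B m * ((M - m : ℕ) : K)) * phiQuot n M z i (m + 1))
        + ∑ m ∈ Icc 1 M, ∑ j ∈ univ.erase i,
            C (B m * (M : K)) * (Y ^ (M - m) * ((X - C (z j)) ^ (M - 1) * Rj j)) := by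
    rw [derivative_sum, ← Finset.sum_add_distrib]
    refine Finset.sum_congr rfl fun m hm => ?_
    rw [hφ m, derivative_C_mul, derivative_mul, derivative_X_sub_C_pow, hdP, hφ (m + 1)]
    have he : M - (m + 1) = M - m - 1 := by omega
    rw [he, Finset.mul_sum, mul_add, Finset.mul_sum, ← hYdef]
    refine congrArg₂ (· + ·) ?_ ?_
    · rw [C_mul]; ring
    · refine Finset.sum_congr rfl fun j hj => ?_
      rw [C_mul]; ring
  -- step 2: partial fractions
  have step2 : ∀ m ∈ Icc 1 M, ∀ j ∈ univ.erase i,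
      C (B m * (M : K)) * (Y ^ (M - m) * ((X - C (z j)) ^ (M - 1) * Rj j))
        = (C (B m * (M : K)) * C (((z j - z i) ^ m)⁻¹)) * phiQuot n M z j 1
          - ∑ s ∈ Icc 1 m,
              (C (B m * (M : K)) * C (((z j - z i) ^ (m - s + 1))⁻¹)) * phiQuot n M z i s := by
    intro m hm j hj
    have hm' := Finset.mem_Icc.1 hm
    rw [hYdef, pf_aux (z i) (z j) (hw j hj) (Rj j) M m hm'.1 hm'.2, ← hYdef, mul_sub]
    congr 1
    · rw [hψ j hj, mul_assoc]
    · rw [Finset.mul_sum]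
      refine Finset.sum_congr rfl fun s hs => ?_
      rw [hφ s, hP2 j hj, mul_assoc]
  have hCil : ∀ (m : ℕ) (l : ℕ),
      ∑ j ∈ univ.erase i, B m * (M : K) * (((z j - z i) ^ l)⁻¹) = B m * Cil n M z i l := by
    intro m l
    simp only [Cil, Finset.mul_sum]
    refine Finset.sum_congr rfl fun j hj => by ring
  have step2' : ∑ m ∈ Icc 1 M, ∑ j ∈ univ.erase i,
      C (B m * (M : K)) * (Y ^ (M - m) * ((X - C (z j)) ^ (M - 1) * Rj j))
    = (∑ j ∈ univ.erase i,
        C (∑ m ∈ Icc 1 M, B m * (M : K) * (((z j - z i) ^ m)⁻¹)) * phiQuot n M z j 1)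
      - ∑ m ∈ Icc 1 M, ∑ s ∈ Icc 1 m,
          C (B m * Cil n M z i (m - s + 1)) * phiQuot n M z i s := by
    rw [Finset.sum_congr rfl (fun m hm => Finset.sum_congr rfl (fun j hj => step2 m hm j hj))]
    rw [Finset.sum_congr rfl (fun (m : ℕ) (_ : m ∈ Icc 1 M) => Finset.sum_sub_distrib _ _)]
    rw [Finset.sum_sub_distrib]
    congr 1
    · rw [Finset.sum_comm]
      refine Finset.sum_congr rfl fun j hj => ?_
      rw [map_sum C (fun m => B m * (M : K) * (((z j - z i) ^ m)⁻¹)) (Icc 1 M),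
        Finset.sum_mul]
      refine Finset.sum_congr rfl fun m hm => ?_
      rw [← C_mul]
    · refine Finset.sum_congr rfl fun m hm => ?_
      rw [Finset.sum_comm]
      refine Finset.sum_congr rfl fun s hs => ?_
      rw [← Finset.sum_mul]
      congr 1
      rw [← hCil m (m - s + 1),
        map_sum C (fun j => B m * (M : K) * (((z j - z i) ^ (m - s + 1))⁻¹)) (univ.erase i)]
      exact Finset.sum_congr rfl fun j _ => C_mul.symm
  have hT1 : ∑ m ∈ Icc 1 M, C (B m * ((M - m : ℕ) : K)) * phiQuot n M z i (m + 1)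
      = ∑ m ∈ Icc 1 M, ∑ l ∈ Icc 1 (M - m),
          C (Cil n M z i l * B (m + l)) * phiQuot n M z i (m + 1) := by
    refine Finset.sum_congr rfl fun m hm => ?_
    have hm' := Finset.mem_Icc.1 hm
    rw [mul_comm (B m), hrec m hm'.1 hm'.2, map_sum, Finset.sum_mul]
  have hbij : ∑ m ∈ Icc 1 M, ∑ l ∈ Icc 1 (M - m),
        C (Cil n M z i l * B (m + l)) * phiQuot n M z i (m + 1)
      = ∑ m ∈ Icc 1 M, ∑ s ∈ Icc 2 m,
          C (B m * Cil n M z i (m - s + 1)) * phiQuot n M z i s := by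
    rw [← Finset.sum_sigma (Icc 1 M) (fun m => Icc 1 (M - m))
        (fun p => C (Cil n M z i p.2 * B (p.1 + p.2)) * phiQuot n M z i (p.1 + 1)),
      ← Finset.sum_sigma (Icc 1 M) (fun m => Icc 2 m)
        (fun q => C (B q.1 * Cil n M z i (q.1 - q.2 + 1)) * phiQuot n M z i q.2)]
    refine Finset.sum_bij' (fun p _ => ⟨p.1 + p.2, p.1 + 1⟩)
      (fun q _ => ⟨q.2 - 1, q.1 - q.2 + 1⟩) ?_ ?_ ?_ ?_ ?_
    · intro p hp
      simp only [Finset.mem_sigma, Finset.mem_Icc] at hp ⊢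
      omega
    · intro q hq
      simp only [Finset.mem_sigma, Finset.mem_Icc] at hq ⊢
      omega
    · intro p hp
      rcases p with ⟨m, l⟩
      simp only [Finset.mem_sigma, Finset.mem_Icc] at hp
      show (⟨m + 1 - 1, m + l - (m + 1) + 1⟩ : Σ _ : ℕ, ℕ) = ⟨m, l⟩
      rw [show m + 1 - 1 = m from by omega, show m + l - (m + 1) + 1 = l from by omega]
    · intro q hq
      rcases q with ⟨m', t⟩
      simp only [Finset.mem_sigma, Finset.mem_Icc] at hq
      show (⟨t - 1 + (m' - t + 1), t - 1 + 1⟩ : Σ _ : ℕ, ℕ) = ⟨m', t⟩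
      rw [show t - 1 + (m' - t + 1) = m' from by omega, show t - 1 + 1 = t from by omega]
    · intro p hp
      rcases p with ⟨m, l⟩
      simp only [Finset.mem_sigma, Finset.mem_Icc] at hp
      show C (Cil n M z i l * B (m + l)) * phiQuot n M z i (m + 1)
          = C (B (m + l) * Cil n M z i (m + l - (m + 1) + 1)) * phiQuot n M z i (m + 1)
      rw [show m + l - (m + 1) + 1 = l from by omega, mul_comm (Cil n M z i l)]
  have hsplit : ∑ m ∈ Icc 1 M, ∑ s ∈ Icc 1 m,
        C (B m * Cil n M z i (m - s + 1)) * phiQuot n M z i s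
      = (∑ m ∈ Icc 1 M, C (B m * Cil n M z i m)) * phiQuot n M z i 1
        + ∑ m ∈ Icc 1 M, ∑ s ∈ Icc 2 m,
            C (B m * Cil n M z i (m - s + 1)) * phiQuot n M z i s := by
    rw [Finset.sum_mul, ← Finset.sum_add_distrib]
    refine Finset.sum_congr rfl fun m hm => ?_
    have hm' := Finset.mem_Icc.1 hm
    have hins : Icc 1 m = insert 1 (Icc 2 m) := by
      ext x; simp only [Finset.mem_Icc, Finset.mem_insert]; omega
    rw [hins, Finset.sum_insert (by simp [Finset.mem_Icc]),
      show m - 1 + 1 = m from by omega]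
  rw [step1, hT1, hbij, step2', hsplit]
  have hre : ∀ (x y w : K[X]), x + (y - (w + x)) = y - w := by intros; ring
  rw [hre]
  refine Submodule.sub_mem _ (Submodule.sum_mem _ fun j hj => ?_) ?_
  · rw [← smul_eq_C_mul]
    exact Submodule.smul_mem _ _ (Submodule.subset_span ⟨j, rfl⟩)
  · rw [← map_sum, ← smul_eq_C_mul]
    exact Submodule.smul_mem _ _ (Submodule.subset_span ⟨i, rfl⟩)

lemma unique_aux {K : Type*} [Field K] (n M : ℕ) (hM : 0 < M)
    (hchar : ∀ m : ℕ, 1 ≤ m → m ≤ M → (m : K) ≠ 0)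
    (z : Fin n → K) (hz : Function.Injective z) (i : Fin n) (c : ℕ → K) (hcM : c M = 0)
    (hD : derivative (∑ m ∈ Icc 1 M, C (c m) * phiQuot n M z i m)
      ∈ Submodule.span K (Set.range fun j : Fin n => phiQuot n M z j 1)) :
    ∑ m ∈ Icc 1 M, C (c m) * phiQuot n M z i m = 0 := by
  classical
  set Y : K[X] := X - C (z i) with hYdef
  set P : K[X] := ∏ a ∈ univ.erase i, (X - C (z a)) ^ M with hPdef
  have hφ : ∀ m, phiQuot n M z i m = Y ^ (M - m) * P := fun m => rfl
  have hPz : eval (z i) P ≠ 0 := by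
    rw [hPdef, eval_prod]
    rw [Finset.prod_ne_zero_iff]
    intro a ha
    rw [eval_pow, eval_sub, eval_X, eval_C]
    apply pow_ne_zero
    exact sub_ne_zero.2 fun h => (Finset.mem_erase.1 ha).1 (hz h.symm)
  have hYdvd : ∀ j : Fin n, Y ^ (M - 1) ∣ phiQuot n M z j 1 := by
    intro j
    by_cases hji : j = i
    · subst hji
      rw [hφ 1]
      exact Dvd.intro _ rfl
    · have hi' : i ∈ univ.erase j := Finset.mem_erase.2 ⟨Ne.symm hji, mem_univ _⟩
      have h1 : Y ^ (M - 1) ∣ Y ^ M := pow_dvd_pow Y (Nat.sub_le M 1)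
      have h2 : Y ^ M ∣ ∏ a ∈ univ.erase j, (X - C (z a)) ^ M := by
        rw [hYdef]
        exact Finset.dvd_prod_of_mem (fun a => (X - C (z a)) ^ M) hi'
      exact (h1.trans h2).trans (dvd_mul_left _ _)
  have hdvdD : Y ^ (M - 1) ∣ derivative (∑ m ∈ Icc 1 M, C (c m) * phiQuot n M z i m) := by
    rw [Submodule.mem_span_range_iff_exists_fun] at hD
    obtain ⟨μ, hμ⟩ := hD
    rw [← hμ]
    refine Finset.dvd_sum fun j _ => ?_
    rw [smul_eq_C_mul]
    exact (hYdvd j).mul_left _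
  set S : Finset ℕ := (Icc 1 (M - 1)).filter (fun m => c m ≠ 0) with hSdef
  rcases S.eq_empty_or_nonempty with hS | hS
  · refine Finset.sum_eq_zero fun m hm => ?_
    have hm' := Finset.mem_Icc.1 hm
    have hc0 : c m = 0 := by
      by_cases h : m = M
      · rw [h]; exact hcM
      · by_contra hne
        have : m ∈ S := Finset.mem_filter.2 ⟨Finset.mem_Icc.2 ⟨by omega, by omega⟩, hne⟩
        rw [hS] at this
        simp at this
    rw [hc0, C_0, zero_mul]
  · exfalso
    set m₁ : ℕ := S.max' hS with hm₁def
    have hm₁S : m₁ ∈ S := S.max'_mem hS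
    have hm₁ : 1 ≤ m₁ ∧ m₁ ≤ M - 1 := Finset.mem_Icc.1 (Finset.mem_filter.1 hm₁S).1
    have hc₁ : c m₁ ≠ 0 := (Finset.mem_filter.1 hm₁S).2
    have hM2 : 2 ≤ M := by omega
    have hmax : ∀ m, m₁ < m → m ≤ M → c m = 0 := by
      intro m hlt hmM
      by_cases h : m = M
      · rw [h]; exact hcM
      · by_contra hne
        have hmS : m ∈ S :=
          Finset.mem_filter.2 ⟨Finset.mem_Icc.2 ⟨by omega, by omega⟩, hne⟩
        have := S.le_max' m hmS
        omega
    set U : K[X] := ∑ m ∈ Icc 1 m₁, C (c m) * (Y ^ (m₁ - m) * P) with hUdef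
    have hsub : ∑ m ∈ Icc 1 M, C (c m) * phiQuot n M z i m
        = ∑ m ∈ Icc 1 m₁, C (c m) * phiQuot n M z i m := by
      refine (Finset.sum_subset (Finset.Icc_subset_Icc_right (by omega : m₁ ≤ M)) ?_).symm
      intro m hm hnot
      have h1 := Finset.mem_Icc.1 hm
      have h2 : m₁ < m := by
        by_contra h3
        exact hnot (Finset.mem_Icc.2 ⟨h1.1, by omega⟩)
      rw [hmax m h2 h1.2, C_0, zero_mul]
    have hDU : (∑ m ∈ Icc 1 M, C (c m) * phiQuot n M z i m) = Y ^ (M - m₁) * U := by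
      rw [hsub, hUdef, Finset.mul_sum]
      refine Finset.sum_congr rfl fun m hm => ?_
      have hm' := Finset.mem_Icc.1 hm
      rw [hφ m, show M - m = (M - m₁) + (m₁ - m) from by omega, pow_add]
      ring
    have hU : eval (z i) U = c m₁ * eval (z i) P := by
      rw [hUdef, eval_finset_sum]
      rw [Finset.sum_eq_single m₁ ?h0 ?h1]
      · rw [Nat.sub_self, pow_zero, one_mul, eval_mul, eval_C]
      case h0 =>
        intro m hm hne
        have hm' := Finset.mem_Icc.1 hm
        have hY0 : eval (z i) Y = 0 := by rw [hYdef]; simp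
        rw [eval_mul, eval_mul, eval_pow, hY0,
          zero_pow (by omega : m₁ - m ≠ 0), zero_mul, mul_zero]
      case h1 =>
        intro h
        exact absurd (Finset.mem_Icc.2 ⟨hm₁.1, le_refl _⟩) h
    have hUz : eval (z i) U ≠ 0 := by
      rw [hU]; exact mul_ne_zero hc₁ hPz
    set V : K[X] := C ((M - m₁ : ℕ) : K) * U + Y * derivative U with hVdef
    have hDer : derivative (Y ^ (M - m₁) * U) = Y ^ (M - m₁ - 1) * V := by
      rw [derivative_mul, hYdef, derivative_X_sub_C_pow, ← hYdef, hVdef]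
      rw [show Y ^ (M - m₁) = Y ^ (M - m₁ - 1) * Y from by rw [← pow_succ]; congr 1; omega]
      ring
    have hVz : eval (z i) V ≠ 0 := by
      have hY0 : eval (z i) Y = 0 := by rw [hYdef]; simp
      rw [hVdef, eval_add, eval_mul, eval_mul, eval_C, hY0, zero_mul, add_zero]
      exact mul_ne_zero (hchar (M - m₁) (by omega) (by omega)) hUz
    have hdvd2 : Y ^ (M - 1) ∣ Y ^ (M - m₁ - 1) * V := by
      rw [← hDer, ← hDU]; exact hdvdD
    rw [show Y ^ (M - 1) = Y ^ (M - m₁ - 1) * Y ^ m₁ from by rw [← pow_add]; congr 1; omega]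
      at hdvd2
    have hYne : Y ^ (M - m₁ - 1) ≠ 0 :=
      pow_ne_zero _ (by rw [hYdef]; exact X_sub_C_ne_zero (z i))
    have hdvdV : Y ^ m₁ ∣ V := (mul_dvd_mul_iff_left hYne).1 hdvd2
    have hdvdY : Y ∣ V := (dvd_pow_self Y (by omega : m₁ ≠ 0)).trans hdvdV
    rw [hYdef, dvd_iff_isRoot] at hdvdY
    exact hVz hdvdY

/-- the unique polynomial
`Q_i = Φ/(x−z_i)^M + Σ_{m=1}^{M−1} A_m·Φ/(x−z_i)^m` whose derivative lies in
the span of the `Φ/(x−z_j)` is given explicitly by the sum over all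
compositions `(l_0,…,l_m)` of `M` of
`Φ/(x−z_i)^{l_0} · ∏_{r=1}^m C_{i,l_r}/(l_1+⋯+l_r)`. -/
theorem stmt12 (K : Type*) [Field K] (n M : ℕ) (hn : 0 < n) (hM : 0 < M)
    (hchar : ∀ m : ℕ, 1 ≤ m → m ≤ M → (m : K) ≠ 0)
    (z : Fin n → K) (hz : Function.Injective z) (i : Fin n)
    (A : Fin (M - 1) → K)
    (hA : derivative (phiQuot n M z i M +
        ∑ m : Fin (M - 1), C (A m) * phiQuot n M z i (m.1 + 1))
      ∈ Submodule.span K (Set.range fun j : Fin n => phiQuot n M z j 1)) :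
    phiQuot n M z i M +
        ∑ m : Fin (M - 1), C (A m) * phiQuot n M z i (m.1 + 1)
      = ∑ c : Composition M,
          C (∏ r ∈ Finset.range (c.length - 1),
              Cil n M z i (c.blocks.getD (r + 1) 0) *
                ((∑ s ∈ Finset.Icc 1 (r + 1), (c.blocks.getD s 0 : K)))⁻¹) *
            phiQuot n M z i (c.blocks.getD 0 0) := by
  classical
  set B : ℕ → K := fun m => compH n M z i (M - m) with hBdef
  -- the right-hand side equals the B-combination
  have hRHS : (∑ c : Composition M,
          C (∏ r ∈ Finset.range (c.length - 1),
              Cil n M z i (c.blocks.getD (r + 1) 0) *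
                ((∑ s ∈ Finset.Icc 1 (r + 1), (c.blocks.getD s 0 : K)))⁻¹) *
            phiQuot n M z i (c.blocks.getD 0 0))
      = ∑ m ∈ Icc 1 M, C (B m) * phiQuot n M z i m := by
    have h1 : (∑ c : Composition M,
          C (∏ r ∈ Finset.range (c.length - 1),
              Cil n M z i (c.blocks.getD (r + 1) 0) *
                ((∑ s ∈ Finset.Icc 1 (r + 1), (c.blocks.getD s 0 : K)))⁻¹) *
            phiQuot n M z i (c.blocks.getD 0 0))
        = ∑ c : Composition M,
            (fun bs : List ℕ =>
              C (∏ r ∈ Finset.range (bs.length - 1),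
                Cil n M z i (bs.getD (r + 1) 0) *
                  ((∑ s ∈ Finset.Icc 1 (r + 1), (bs.getD s 0 : K)))⁻¹) *
              phiQuot n M z i (bs.getD 0 0)) c.blocks := by
      refine Finset.sum_congr rfl fun c _ => ?_
      simp only [Composition.blocks_length]
    rw [h1]
    rw [comp_sum_cons M hM (fun bs : List ℕ =>
      C (∏ r ∈ Finset.range (bs.length - 1),
        Cil n M z i (bs.getD (r + 1) 0) *
          ((∑ s ∈ Finset.Icc 1 (r + 1), (bs.getD s 0 : K)))⁻¹) *
        phiQuot n M z i (bs.getD 0 0))]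
    refine Finset.sum_congr rfl fun l hl => ?_
    have h2 : ∀ c : Composition (M - l),
        (fun bs : List ℕ =>
          C (∏ r ∈ Finset.range (bs.length - 1),
            Cil n M z i (bs.getD (r + 1) 0) *
              ((∑ s ∈ Finset.Icc 1 (r + 1), (bs.getD s 0 : K)))⁻¹) *
          phiQuot n M z i (bs.getD 0 0)) (l :: c.blocks)
        = C (compW n M z i c.blocks) * phiQuot n M z i l := by
      intro c
      simp only [List.length_cons, Nat.add_sub_cancel, List.getD_cons_succ,
        List.getD_cons_zero]
      congr 1
      unfold compW
      refine congrArg C (Finset.prod_congr rfl fun r hr => ?_)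
      congr 2
      rw [show Icc 1 (r + 1) = Ico 1 (r + 2) from by rw [show r + 2 = r + 1 + 1 from rfl, Finset.Ico_add_one_right_eq_Icc],
        Finset.sum_Ico_eq_sum_range]
      rw [show r + 2 - 1 = r + 1 from by omega]
      refine Finset.sum_congr rfl fun t _ => ?_
      rw [show 1 + t = t + 1 from by omega, List.getD_cons_succ]
    rw [Finset.sum_congr rfl fun c _ => h2 c, ← Finset.sum_mul,
      ← map_sum C (fun c : Composition (M - l) => compW n M z i c.blocks) univ]
    rfl
  -- B satisfies the recursion
  have hrecB : ∀ m, 1 ≤ m → m ≤ M →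
      ((M - m : ℕ) : K) * B m = ∑ l ∈ Icc 1 (M - m), Cil n M z i l * B (m + l) := by
    intro m h1 h2
    by_cases hmM : m = M
    · subst hmM
      simp [hBdef]
    · have hd : 0 < M - m := by omega
      have hdK : ((M - m : ℕ) : K) ≠ 0 := hchar (M - m) (by omega) (by omega)
      rw [hBdef]
      rw [compH_rec n M z i (M - m) hd hdK]
      refine Finset.sum_congr rfl fun l hl => ?_
      have hl' := Finset.mem_Icc.1 hl
      rw [show M - m - l = M - (m + l) from by omega]
  -- the A-combination as a sum over Icc
  set a : ℕ → K := fun m =>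
    if h : 1 ≤ m ∧ m ≤ M - 1 then A ⟨m - 1, by omega⟩ else if m = M then 1 else 0
    with hadef
  have haM : a M = 1 := by
    rw [hadef]
    simp only []
    rw [dif_neg (by omega)]
    simp
  have hLHS : phiQuot n M z i M + ∑ m : Fin (M - 1), C (A m) * phiQuot n M z i (m.1 + 1)
      = ∑ m ∈ Icc 1 M, C (a m) * phiQuot n M z i m := by
    rw [show Icc 1 M = insert M (Icc 1 (M - 1)) from by
        ext x; simp only [Finset.mem_Icc, Finset.mem_insert]; omega,
      Finset.sum_insert (by simp only [Finset.mem_Icc]; omega)]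
    congr 1
    · rw [haM, C_1, one_mul]
    · rw [show Icc 1 (M - 1) = Ico 1 M from by
          ext x; simp only [Finset.mem_Icc, Finset.mem_Ico]; omega,
        Finset.sum_Ico_eq_sum_range,
        ← Fin.sum_univ_eq_sum_range (fun t => C (a (1 + t)) * phiQuot n M z i (1 + t)) (M - 1)]
      refine Finset.sum_congr rfl fun t _ => ?_
      have ht : 1 ≤ 1 + t.1 ∧ 1 + t.1 ≤ M - 1 := ⟨by omega, by omega⟩
      have ha1 : a (1 + t.1) = A t := by
        rw [hadef]
        simp only []
        rw [dif_pos ht]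
        congr 1
        exact Fin.ext (by simp)
      rw [ha1, show 1 + t.1 = t.1 + 1 from by omega]
  -- difference
  have hcM : a M - B M = 0 := by
    rw [haM, hBdef]
    simp only []
    rw [Nat.sub_self, compH_zero, sub_self]
  have hdiff : ∑ m ∈ Icc 1 M, C (a m - B m) * phiQuot n M z i m
      = (∑ m ∈ Icc 1 M, C (a m) * phiQuot n M z i m)
        - ∑ m ∈ Icc 1 M, C (B m) * phiQuot n M z i m := by
    rw [← Finset.sum_sub_distrib]
    refine Finset.sum_congr rfl fun m _ => ?_
    rw [C_sub, sub_mul]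
  have hzero : ∑ m ∈ Icc 1 M, C (a m - B m) * phiQuot n M z i m = 0 := by
    refine unique_aux n M hM hchar z hz i (fun m => a m - B m) hcM ?_
    rw [hdiff, derivative_sub]
    refine Submodule.sub_mem _ ?_ (deriv_mem n M hM z hz i B hrecB)
    rw [← hLHS]
    exact hA
  rw [hLHS, hRHS]
  have := sub_eq_zero.1 (hdiff ▸ hzero)
  exact this
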